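/- Let p be a prime and (x_n)_{n∈ℕ} ⊂ ℤ_p. If the p-adic discrepancy satisfies D_N(x_n) = O(N^{−ε}) for some ε with 0 < ε ≤ 1, then (x_n) has weak Poissonian pair correlations for every α with 0 < α < ε. -/

import Mathlib

open MeasureTheory Filter
open scoped Classical

/-- The closed ball `D_p(z,s) = {x ∈ ℤ_p : |x - z|_p ≤ s}`. -/
def padicBall (p : ℕ) [Fact p.Prime] (z : ℤ_[p]) (s : ℝ) : Set ℤ_[p] :=
  {x : ℤ_[p] | ‖x - z‖ ≤ s}

/-- The p-adic discrepancy of the first `N` terms of a sequence `x : ℕ → ℤ_[p]`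
(indexed starting at 1):
`D_N(x) = sup_{z ∈ ℤ_p, k ∈ ℕ} | #{1 ≤ n ≤ N : x_n ∈ D_p(z, p^{-k})}/N - p^{-k} |`. -/
noncomputable def padicDiscrepancy (p : ℕ) [Fact p.Prime] (x : ℕ → ℤ_[p]) (N : ℕ) : ℝ :=
  ⨆ z : ℤ_[p], ⨆ k : ℕ,
    |(((Finset.Icc 1 N).filter fun n =>
        x n ∈ padicBall p z ((p : ℝ) ^ (-(k : ℤ)))).card : ℝ) / N - (p : ℝ) ^ (-(k : ℤ))|

/-- `#{1 ≤ i ≠ j ≤ N : |x_i - x_j|_p ≤ t}`. -/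
noncomputable def pairCount (p : ℕ) [Fact p.Prime] (x : ℕ → ℤ_[p]) (N : ℕ) (t : ℝ) : ℕ :=
  ((Finset.Icc 1 N ×ˢ Finset.Icc 1 N).filter
    fun ij => ij.1 ≠ ij.2 ∧ ‖x ij.1 - x ij.2‖ ≤ t).card

/-- The pair correlation function
`F_{N,α,p}(s) = (1/N²)·(1/μ(D_p(0, s/N^α)))·#{1 ≤ i ≠ j ≤ N : |x_i - x_j|_p ≤ s/N^α}`. -/
noncomputable def pairF (p : ℕ) [Fact p.Prime] [MeasurableSpace ℤ_[p]]
    (μ : Measure ℤ_[p]) (x : ℕ → ℤ_[p]) (α : ℝ) (N : ℕ) (s : ℝ) : ℝ :=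
  (1 / (N : ℝ) ^ 2) * (1 / (μ (padicBall p 0 (s / (N : ℝ) ^ α))).toReal) *
    (pairCount p x N (s / (N : ℝ) ^ α) : ℝ)

/-- `x` has weak Poissonian pair correlations for `α` (w.r.t. the normalized Haar
measure `μ`) if `F_{N,α,p}(s) → 1` for all `s > 0`. -/
def HasWeakPPC (p : ℕ) [Fact p.Prime] [MeasurableSpace ℤ_[p]] (μ : Measure ℤ_[p])
    (x : ℕ → ℤ_[p]) (α : ℝ) : Prop :=
  ∀ s : ℝ, 0 < s → Tendsto (fun N : ℕ => pairF p μ x α N s) atTop (nhds 1)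

lemma key_iff (p : ℕ) [Fact p.Prime] (k : ℕ) (a b : ℤ_[p]) :
    ‖a - b‖ ≤ (p:ℝ)^(-(k:ℤ)) ↔ PadicInt.toZModPow k a = PadicInt.toZModPow k b := by
  rw [show ((-(k:ℤ)) = (-k : ℤ)) from rfl, PadicInt.norm_le_pow_iff_mem_span_pow,
    ← PadicInt.ker_toZModPow, RingHom.mem_ker, map_sub, sub_eq_zero]

noncomputable def kOf (p : ℕ) [Fact p.Prime] (t : ℝ) : ℕ :=
  if h : ∃ k : ℕ, (p:ℝ)^(-(k:ℤ)) ≤ t then Nat.find h else 0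

lemma kOf_exists (p : ℕ) [Fact p.Prime] {t : ℝ} (ht : 0 < t) :
    ∃ k : ℕ, (p:ℝ)^(-(k:ℤ)) ≤ t := by
  have hp1 : (1:ℝ) < p := by exact_mod_cast (Fact.out : p.Prime).one_lt
  obtain ⟨n, hn⟩ := exists_pow_lt_of_lt_one ht (by
    rw [inv_lt_one_iff₀]; right; exact hp1 : (p:ℝ)⁻¹ < 1)
  exact ⟨n, by rw [zpow_neg, zpow_natCast, ← inv_pow]; exact hn.le⟩

lemma kOf_spec (p : ℕ) [Fact p.Prime] {t : ℝ} (ht : 0 < t) :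
    (p:ℝ)^(-(kOf p t:ℤ)) ≤ t := by
  rw [kOf, dif_pos (kOf_exists p ht)]
  exact Nat.find_spec (kOf_exists p ht)

lemma kOf_min (p : ℕ) [Fact p.Prime] {t : ℝ} (ht : 0 < t) {m : ℕ}
    (hm : (p:ℝ)^(-(m:ℤ)) ≤ t) : kOf p t ≤ m := by
  rw [kOf, dif_pos (kOf_exists p ht)]
  exact Nat.find_le hm

lemma norm_le_reduce (p : ℕ) [Fact p.Prime] {t : ℝ} (ht : 0 < t) (a : ℤ_[p]) :
    ‖a‖ ≤ t ↔ ‖a‖ ≤ (p:ℝ)^(-(kOf p t:ℤ)) := by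
  have hp1 : (1:ℝ) < p := by exact_mod_cast (Fact.out : p.Prime).one_lt
  constructor
  · intro hat
    rcases eq_or_ne a 0 with rfl | ha
    · simp [zpow_nonneg (by positivity : (0:ℝ) ≤ (p:ℝ))]
    · have hv := PadicInt.norm_eq_zpow_neg_valuation ha
      set m : ℕ := a.valuation with hm
      have hma : ‖a‖ = (p:ℝ)^(-(m:ℤ)) := by
        rw [hv]
      rw [hma] at hat ⊢
      have := kOf_min p ht hat
      exact zpow_le_zpow_right₀ hp1.le (by exact_mod_cast neg_le_neg (by exact_mod_cast this))
  · intro h; exact h.trans (kOf_spec p ht)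

lemma kOf_lt (p : ℕ) [Fact p.Prime] {t : ℝ} (ht : 0 < t) (ht1 : t < 1) :
    t < (p:ℝ) * (p:ℝ)^(-(kOf p t:ℤ)) := by
  have hp1 : (1:ℝ) < p := by exact_mod_cast (Fact.out : p.Prime).one_lt
  have hk : kOf p t ≠ 0 := by
    intro h0
    have := kOf_spec p ht
    rw [h0] at this; simp at this; linarith
  obtain ⟨m, hm⟩ := Nat.exists_eq_succ_of_ne_zero hk
  have hnot : ¬ ((p:ℝ)^(-(m:ℤ)) ≤ t) := by
    intro hmt
    have := kOf_min p ht hmt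
    omega
  push_neg at hnot
  calc t < (p:ℝ)^(-(m:ℤ)) := hnot
  _ = (p:ℝ) * (p:ℝ)^(-(kOf p t:ℤ)) := by
      rw [hm]; push_cast
      rw [show (-(m:ℤ)) = 1 + -((m:ℤ)+1) by ring, zpow_add₀ (by positivity), zpow_one]


lemma padicBall_measurable (p : ℕ) [Fact p.Prime] [MeasurableSpace ℤ_[p]] [BorelSpace ℤ_[p]]
    (z : ℤ_[p]) (r : ℝ) : MeasurableSet (padicBall p z r) := by
  have : padicBall p z r = Metric.closedBall z r := by
    ext x; simp [padicBall, Metric.mem_closedBall, dist_eq_norm]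
  rw [this]; exact measurableSet_closedBall

lemma padicBall_eq_fiber (p : ℕ) [Fact p.Prime] (k : ℕ) (z : ℤ_[p]) :
    padicBall p z ((p:ℝ)^(-(k:ℤ))) = (PadicInt.toZModPow k) ⁻¹' {PadicInt.toZModPow k z} := by
  ext x
  simp only [padicBall, Set.mem_setOf_eq, Set.mem_preimage, Set.mem_singleton_iff]
  exact key_iff p k x z

lemma fiber_eq_ball (p : ℕ) [Fact p.Prime] (k : ℕ) (c : ZMod (p^k)) :
    (PadicInt.toZModPow k) ⁻¹' {c} = padicBall p ((c.val : ℤ_[p])) ((p:ℝ)^(-(k:ℤ))) := by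
  haveI : NeZero (p^k) := ⟨pow_ne_zero _ (Fact.out : p.Prime).ne_zero⟩
  rw [padicBall_eq_fiber]
  have : PadicInt.toZModPow (p := p) k ((c.val : ℕ) : ℤ_[p]) = c := by
    rw [map_natCast]
    exact ZMod.natCast_rightInverse c
  rw [this]

lemma meas_padicBall (p : ℕ) [Fact p.Prime] [MeasurableSpace ℤ_[p]] [BorelSpace ℤ_[p]]
    (μ : Measure ℤ_[p]) [μ.IsAddHaarMeasure] [IsProbabilityMeasure μ]
    (k : ℕ) (z : ℤ_[p]) :
    μ (padicBall p z ((p:ℝ)^(-(k:ℤ)))) = (((p^k : ℕ) : ENNReal))⁻¹ := by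
  haveI : NeZero (p^k) := ⟨pow_ne_zero _ (Fact.out : p.Prime).ne_zero⟩
  have htrans : ∀ w : ℤ_[p], μ (padicBall p w ((p:ℝ)^(-(k:ℤ)))) =
      μ (padicBall p 0 ((p:ℝ)^(-(k:ℤ)))) := by
    intro w
    have : padicBall p w ((p:ℝ)^(-(k:ℤ))) =
        (fun x => (-w) + x) ⁻¹' (padicBall p 0 ((p:ℝ)^(-(k:ℤ)))) := by
      ext x
      simp only [padicBall, Set.mem_setOf_eq, Set.mem_preimage]
      rw [show (-w + x - 0 = x - w) by ring]
    rw [this, measure_preimage_add]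
  set m := μ (padicBall p 0 ((p:ℝ)^(-(k:ℤ)))) with hm
  have hunion : (Set.univ : Set ℤ_[p]) = ⋃ c : ZMod (p^k), (PadicInt.toZModPow k) ⁻¹' {c} := by
    ext x; simp
  have hdisj : Pairwise (Function.onFun Disjoint
      fun c : ZMod (p^k) => (PadicInt.toZModPow k) ⁻¹' {c}) := by
    intro a b hab
    simp only [Function.onFun]
    apply Set.disjoint_left.2
    intro x ha hb
    simp only [Set.mem_preimage, Set.mem_singleton_iff] at ha hb
    exact hab (ha ▸ hb ▸ rfl)
  have hmeas : ∀ c : ZMod (p^k), MeasurableSet ((PadicInt.toZModPow k) ⁻¹' {c}) := by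
    intro c; rw [fiber_eq_ball]; exact padicBall_measurable p _ _
  have h1 : (1 : ENNReal) = ∑' c : ZMod (p^k), μ ((PadicInt.toZModPow k) ⁻¹' {c}) := by
    rw [← measure_iUnion hdisj hmeas, ← hunion, measure_univ]
  have h2 : ∀ c : ZMod (p^k), μ ((PadicInt.toZModPow k) ⁻¹' {c}) = m := by
    intro c; rw [fiber_eq_ball]; exact htrans _
  rw [tsum_congr h2, tsum_fintype, Finset.sum_const, Finset.card_univ, ZMod.card,
    nsmul_eq_mul] at h1
  have hne : ((p^k : ℕ) : ENNReal) ≠ 0 := by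
    exact_mod_cast Nat.cast_ne_zero.2 (Nat.pos_of_ne_zero (NeZero.ne _)).ne'
  have := congrArg (fun x => (((p^k : ℕ) : ENNReal))⁻¹ * x) h1
  simp only [mul_one] at this
  rw [← mul_assoc, ENNReal.inv_mul_cancel hne (by exact_mod_cast ENNReal.natCast_ne_top _),
    one_mul] at this
  rw [htrans z]; exact this.symm


lemma pair_split {M : Type*} [Fintype M] [DecidableEq M] (S : Finset ℕ) (f : ℕ → M) :
    ((S ×ˢ S).filter fun ij => ij.1 ≠ ij.2 ∧ f ij.1 = f ij.2).card + S.card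
      = ∑ c : M, ((S.filter fun n => f n = c).card) ^ 2 := by
  have hsplit : ((S ×ˢ S).filter fun ij => f ij.1 = f ij.2).card
      = ((S ×ˢ S).filter fun ij => ij.1 ≠ ij.2 ∧ f ij.1 = f ij.2).card + S.card := by
    have h1 := Finset.card_filter_add_card_filter_not
      (s := (S ×ˢ S).filter fun ij => f ij.1 = f ij.2) (p := fun ij => ij.1 = ij.2)
    rw [Finset.filter_filter, Finset.filter_filter] at h1
    have e1 : ((S ×ˢ S).filter fun ij => f ij.1 = f ij.2 ∧ ij.1 = ij.2) = S.diag := by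
      ext ⟨i, j⟩
      simp only [Finset.mem_filter, Finset.mem_product, Finset.mem_diag]
      constructor
      · rintro ⟨⟨hi, hj⟩, ⟨_, h⟩⟩; exact ⟨hi, h⟩
      · rintro ⟨hi, h⟩; subst h; exact ⟨⟨hi, hi⟩, rfl, rfl⟩
    have e2 : ((S ×ˢ S).filter fun ij => f ij.1 = f ij.2 ∧ ¬ ij.1 = ij.2)
        = ((S ×ˢ S).filter fun ij => ij.1 ≠ ij.2 ∧ f ij.1 = f ij.2) := by
      apply Finset.filter_congr; intro ij _; tauto
    rw [e1, e2, Finset.diag_card] at h1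
    omega
  have hbU : ((S ×ˢ S).filter fun ij => f ij.1 = f ij.2)
      = Finset.univ.biUnion fun c : M =>
          (S.filter fun n => f n = c) ×ˢ (S.filter fun n => f n = c) := by
    ext ⟨i, j⟩
    simp only [Finset.mem_filter, Finset.mem_product, Finset.mem_biUnion, Finset.mem_univ,
      true_and]
    constructor
    · rintro ⟨⟨hi, hj⟩, h⟩; exact ⟨f j, ⟨hi, h⟩, hj, rfl⟩
    · rintro ⟨c, ⟨hi, hci⟩, hj, hcj⟩; exact ⟨⟨hi, hj⟩, hci.trans hcj.symm⟩
  have hdisj : ∀ c ∈ (Finset.univ : Finset M), ∀ d ∈ Finset.univ, c ≠ d →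
      Disjoint ((S.filter fun n => f n = c) ×ˢ (S.filter fun n => f n = c))
        ((S.filter fun n => f n = d) ×ˢ (S.filter fun n => f n = d)) := by
    intro c _ d _ hcd
    apply Finset.disjoint_left.2
    rintro ⟨i, j⟩ h1 h2
    simp only [Finset.mem_product, Finset.mem_filter] at h1 h2
    exact hcd (h1.1.2 ▸ h2.1.2 ▸ rfl)
  rw [← hsplit, hbU, Finset.card_biUnion hdisj]
  apply Finset.sum_congr rfl
  intro c _
  rw [Finset.card_product, sq]

lemma sum_fibers {M : Type*} [Fintype M] [DecidableEq M] (S : Finset ℕ) (f : ℕ → M) :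
    ∑ c : M, (S.filter fun n => f n = c).card = S.card :=
  (Finset.card_eq_sum_card_fiberwise (fun x _ => Finset.mem_univ (f x))).symm


lemma discr_term_le_one (p : ℕ) [Fact p.Prime] (x : ℕ → ℤ_[p]) (N : ℕ) (z : ℤ_[p]) (k : ℕ) :
    |(((Finset.Icc 1 N).filter fun n =>
        x n ∈ padicBall p z ((p : ℝ) ^ (-(k : ℤ)))).card : ℝ) / N - (p : ℝ) ^ (-(k : ℤ))| ≤ 1 := by
  have hp1 : (1:ℝ) ≤ p := by exact_mod_cast (Fact.out : p.Prime).one_lt.le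
  have hcard : (((Finset.Icc 1 N).filter fun n =>
      x n ∈ padicBall p z ((p : ℝ) ^ (-(k : ℤ)))).card : ℝ) ≤ N := by
    exact_mod_cast (Finset.card_filter_le _ _).trans (by simp [Nat.card_Icc])
  have h0 : (0:ℝ) ≤ (((Finset.Icc 1 N).filter fun n =>
      x n ∈ padicBall p z ((p : ℝ) ^ (-(k : ℤ)))).card : ℝ) := by positivity
  have hq : (((Finset.Icc 1 N).filter fun n =>
      x n ∈ padicBall p z ((p : ℝ) ^ (-(k : ℤ)))).card : ℝ) / N ≤ 1 ∧
      (0:ℝ) ≤ (((Finset.Icc 1 N).filter fun n =>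
      x n ∈ padicBall p z ((p : ℝ) ^ (-(k : ℤ)))).card : ℝ) / N := by
    rcases Nat.eq_zero_or_pos N with rfl | hN
    · simp
    · have hN' : (0:ℝ) < N := by exact_mod_cast hN
      exact ⟨div_le_one_of_le₀ hcard hN'.le, by positivity⟩
  have hz1 : (p:ℝ) ^ (-(k:ℤ)) ≤ 1 := by
    rw [zpow_neg, zpow_natCast]
    exact inv_le_one_of_one_le₀ (one_le_pow₀ hp1)
  have hz0 : (0:ℝ) < (p:ℝ) ^ (-(k:ℤ)) := by positivity
  rw [abs_sub_le_iff]
  constructor <;> linarith [hq.1, hq.2]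

lemma le_padicDiscrepancy (p : ℕ) [Fact p.Prime] (x : ℕ → ℤ_[p]) (N : ℕ) (z : ℤ_[p]) (k : ℕ) :
    |(((Finset.Icc 1 N).filter fun n =>
        x n ∈ padicBall p z ((p : ℝ) ^ (-(k : ℤ)))).card : ℝ) / N - (p : ℝ) ^ (-(k : ℤ))|
      ≤ padicDiscrepancy p x N := by
  have hbk : ∀ w : ℤ_[p], BddAbove (Set.range fun j : ℕ =>
      |(((Finset.Icc 1 N).filter fun n =>
        x n ∈ padicBall p w ((p : ℝ) ^ (-(j : ℤ)))).card : ℝ) / N - (p : ℝ) ^ (-(j : ℤ))|) := by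
    intro w
    exact ⟨1, by rintro _ ⟨j, rfl⟩; exact discr_term_le_one p x N w j⟩
  have hbz : BddAbove (Set.range fun w : ℤ_[p] => ⨆ j : ℕ,
      |(((Finset.Icc 1 N).filter fun n =>
        x n ∈ padicBall p w ((p : ℝ) ^ (-(j : ℤ)))).card : ℝ) / N - (p : ℝ) ^ (-(j : ℤ))|) := by
    refine ⟨1, ?_⟩
    rintro _ ⟨w, rfl⟩
    exact ciSup_le fun j => discr_term_le_one p x N w j
  exact le_trans (le_ciSup (hbk z) k) (le_ciSup hbz z)


lemma core_est {M : Type*} [Fintype M] (A : M → ℝ) (Nr δ D : ℝ)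
    (hNr : 0 < Nr) (hδ : 0 < δ) (hK : (Fintype.card M : ℝ) * δ = 1)
    (hsum : ∑ c, A c = Nr) (hD : ∀ c, |A c / Nr - δ| ≤ D) :
    |(1/Nr^2) * (1/δ) * ((∑ c, (A c)^2) - Nr) - 1|
      ≤ (Fintype.card M : ℝ)^2 * D^2 + (Fintype.card M : ℝ)/Nr := by
  set K : ℝ := (Fintype.card M : ℝ) with hKdef
  have hK0 : 0 < K := by
    rcases lt_or_ge 0 K with h | h
    · exact h
    · exfalso; nlinarith
  have hne : Nonempty M := by
    rw [← Fintype.card_pos_iff]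
    have : (0:ℝ) < (Fintype.card M : ℝ) := hK0
    exact_mod_cast this
  obtain ⟨c0⟩ := hne
  have hD0 : 0 ≤ D := le_trans (abs_nonneg _) (hD c0)
  set S : ℝ := ∑ c, (A c - Nr*δ)^2 with hSdef
  have hS0 : 0 ≤ S := Finset.sum_nonneg fun c _ => sq_nonneg _
  have hSle : S ≤ K * (Nr * D)^2 := by
    have : ∀ c : M, (A c - Nr*δ)^2 ≤ (Nr*D)^2 := by
      intro c
      have h1 : |A c - Nr*δ| ≤ Nr * D := by
        have := hD c
        rw [div_sub' hNr.ne', abs_div, abs_of_pos hNr, div_le_iff₀ hNr] at this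
        calc |A c - Nr*δ| ≤ D * Nr := this
        _ = Nr * D := by ring
      calc (A c - Nr*δ)^2 = |A c - Nr*δ|^2 := (sq_abs _).symm
      _ ≤ (Nr*D)^2 := by
          apply pow_le_pow_left₀ (abs_nonneg _) h1
    calc S ≤ ∑ _c : M, (Nr*D)^2 := Finset.sum_le_sum fun c _ => this c
    _ = K * (Nr*D)^2 := by rw [Finset.sum_const, Finset.card_univ, nsmul_eq_mul]
  have key : (∑ c, (A c)^2) = S + Nr^2*δ := by
    have e1 : S = (∑ c, (A c)^2) - 2*Nr*δ*(∑ c, A c) + K*(Nr*δ)^2 := by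
      rw [hSdef]
      have : ∀ c : M, (A c - Nr*δ)^2 = (A c)^2 - 2*Nr*δ*(A c) + (Nr*δ)^2 := fun c => by ring
      rw [Finset.sum_congr rfl fun c _ => this c, Finset.sum_add_distrib,
        Finset.sum_sub_distrib, ← Finset.mul_sum, Finset.sum_const, Finset.card_univ,
        nsmul_eq_mul]
    have e2 : K*(Nr*δ)^2 = Nr^2*δ := by
      calc K*(Nr*δ)^2 = (K*δ)*(Nr^2*δ) := by ring
      _ = Nr^2*δ := by rw [hK]; ring
    rw [e1, hsum, e2]; ring
  rw [key]
  have hδK : δ = K⁻¹ := eq_inv_of_mul_eq_one_left (by rw [mul_comm] at hK; exact hK)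
  have e3 : (1/Nr^2) * (1/δ) * ((S + Nr^2*δ) - Nr) - 1 = (S - Nr)/(Nr^2*δ) := by
    field_simp
    ring
  rw [e3]
  have h4 : |S - Nr| ≤ K*(Nr*D)^2 + Nr := by
    calc |S - Nr| ≤ |S| + |Nr| := abs_sub _ _
    _ = S + Nr := by rw [abs_of_nonneg hS0, abs_of_pos hNr]
    _ ≤ K*(Nr*D)^2 + Nr := by linarith
  calc |(S - Nr)/(Nr^2*δ)| = |S - Nr|/(Nr^2*δ) := by
        rw [abs_div, abs_of_pos (show (0:ℝ) < Nr^2*δ by positivity)]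
  _ ≤ (K*(Nr*D)^2 + Nr)/(Nr^2*δ) := by gcongr --x

  _ = K^2*D^2 + K/Nr := by
        rw [hδK]
        field_simp


theorem hasWeakPPC_of_discrepancy_isBigO
    (p : ℕ) [Fact p.Prime] [MeasurableSpace ℤ_[p]] [BorelSpace ℤ_[p]]
    (μ : Measure ℤ_[p]) [μ.IsAddHaarMeasure] [IsProbabilityMeasure μ]
    (x : ℕ → ℤ_[p]) (ε : ℝ) (hε0 : 0 < ε) (hε1 : ε ≤ 1)
    (h : (fun N : ℕ => padicDiscrepancy p x N) =O[atTop] fun N : ℕ => (N : ℝ) ^ (-ε)) :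
    ∀ α : ℝ, 0 < α → α < ε → HasWeakPPC p μ x α := by
  intro α hα0 hαε s hs
  obtain ⟨C, hC0, hC⟩ := h.exists_pos
  have hCbd := hC.bound
  have hp1 : (1:ℝ) < p := by exact_mod_cast (Fact.out : p.Prime).one_lt
  -- the eventual bound
  have key : ∀ᶠ N : ℕ in atTop, ‖pairF p μ x α N s - 1‖ ≤
      ((p:ℝ)*C/s)^2 * (N:ℝ)^(2*(α-ε)) + ((p:ℝ)/s) * (N:ℝ)^(α-1) := by
    have hinf : Tendsto (fun N : ℕ => (N:ℝ)^α) atTop atTop :=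
      (tendsto_rpow_atTop hα0).comp tendsto_natCast_atTop_atTop
    filter_upwards [eventually_ge_atTop 1, hinf.eventually_gt_atTop s, hCbd]
      with N hN1 hNs hND
    have hNr0 : (0:ℝ) < N := by exact_mod_cast hN1
    have hNα : (0:ℝ) < (N:ℝ)^α := Real.rpow_pos_of_pos hNr0 α
    set t : ℝ := s / (N:ℝ)^α with htdef
    have ht0 : 0 < t := div_pos hs hNα
    have ht1 : t < 1 := (div_lt_one hNα).2 hNs
    set k : ℕ := kOf p t with hkdef
    haveI : NeZero (p^k) := ⟨pow_ne_zero _ (Fact.out : p.Prime).ne_zero⟩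
    set δ : ℝ := (p:ℝ)^(-(k:ℤ)) with hδdef
    have hδ0 : 0 < δ := by positivity
    have hδt : δ ≤ t := kOf_spec p ht0
    have htδ : t < (p:ℝ) * δ := kOf_lt p ht0 ht1
    set f : ℕ → ZMod (p^k) := fun n => PadicInt.toZModPow k (x n) with hfdef
    set A : ZMod (p^k) → ℝ :=
      fun c => (((Finset.Icc 1 N).filter fun n => f n = c).card : ℝ) with hAdef
    set K : ℝ := (Fintype.card (ZMod (p^k)) : ℝ) with hKdef
    have hcardM : K = (p:ℝ)^(k:ℕ) := by
      rw [hKdef, ZMod.card]; push_cast; ring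
    have hK : K * δ = 1 := by
      rw [hcardM, hδdef, zpow_neg, zpow_natCast, mul_inv_cancel₀ (by positivity)]
    -- pairCount identity
    have hcount : (pairCount p x N t : ℝ) = (∑ c, (A c)^2) - N := by
      have e0 : pairCount p x N t = ((Finset.Icc 1 N ×ˢ Finset.Icc 1 N).filter
          fun ij => ij.1 ≠ ij.2 ∧ f ij.1 = f ij.2).card := by
        unfold pairCount
        congr 1
        apply Finset.filter_congr
        intro ij _
        have : ‖x ij.1 - x ij.2‖ ≤ t ↔ f ij.1 = f ij.2 := by
          rw [norm_le_reduce p ht0, ← hkdef, key_iff]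
        rw [this]
      have e1 := pair_split (M := ZMod (p^k)) (Finset.Icc 1 N) f
      rw [← e0, Nat.card_Icc, Nat.add_sub_cancel] at e1
      have e2 : ((pairCount p x N t + N : ℕ) : ℝ)
          = ((∑ c, ((Finset.Icc 1 N).filter fun n => f n = c).card ^ 2 : ℕ) : ℝ) := by
        exact_mod_cast e1
      push_cast at e2
      simp only [hAdef]
      push_cast
      linarith [e2]
    have hsumA : ∑ c, A c = (N:ℝ) := by
      have h5 := sum_fibers (M := ZMod (p^k)) (Finset.Icc 1 N) f
      rw [Nat.card_Icc, Nat.add_sub_cancel] at h5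
      simp only [hAdef]
      exact_mod_cast h5
    -- discrepancy bound on fibers
    have hD : ∀ c : ZMod (p^k), |A c / N - δ| ≤ C * (N:ℝ)^(-ε) := by
      intro c
      set z : ℤ_[p] := ((c.val : ℕ) : ℤ_[p]) with hzdef
      have hz : PadicInt.toZModPow (p := p) k z = c := by
        rw [hzdef, map_natCast]
        exact ZMod.natCast_rightInverse c
      have hfilter : ((Finset.Icc 1 N).filter fun n => f n = c)
          = ((Finset.Icc 1 N).filter fun n => x n ∈ padicBall p z ((p:ℝ)^(-(k:ℤ)))) := by
        apply Finset.filter_congr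
        intro n _
        show f n = c ↔ ‖x n - z‖ ≤ (p:ℝ)^(-(k:ℤ))
        rw [key_iff, hz]
      have hle := le_padicDiscrepancy p x N z k
      rw [← hfilter] at hle
      have hnorm : padicDiscrepancy p x N ≤ C * (N:ℝ)^(-ε) := by
        have h1 : ‖(N:ℝ)^(-ε)‖ = (N:ℝ)^(-ε) :=
          Real.norm_of_nonneg (Real.rpow_nonneg hNr0.le _)
        calc padicDiscrepancy p x N ≤ ‖padicDiscrepancy p x N‖ := le_abs_self _
        _ ≤ C * ‖(N:ℝ)^(-ε)‖ := hND
        _ = C * (N:ℝ)^(-ε) := by rw [h1]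
      exact le_trans hle hnorm
    -- measure of the ball
    have hmeas : (μ (padicBall p 0 t)).toReal = δ := by
      have hball : padicBall p 0 t = padicBall p 0 ((p:ℝ)^(-(k:ℤ))) := by
        ext y
        simp only [padicBall, Set.mem_setOf_eq]
        exact norm_le_reduce p ht0 (y - 0)
      rw [hball, meas_padicBall]
      rw [ENNReal.toReal_inv]
      simp only [ENNReal.toReal_natCast]
      rw [hδdef, zpow_neg, zpow_natCast]
      push_cast
      ring
    -- apply the core estimate
    have hcore := core_est (M := ZMod (p^k)) A (N:ℝ) δ (C * (N:ℝ)^(-ε)) hNr0 hδ0 hK hsumA hD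
    have hFeq : pairF p μ x α N s - 1
        = (1/(N:ℝ)^2) * (1/δ) * ((∑ c, (A c)^2) - (N:ℝ)) - 1 := by
      unfold pairF
      rw [← htdef, hmeas, hcount]
    rw [Real.norm_eq_abs, hFeq]
    refine le_trans hcore ?_
    -- bound K
    have hKle : K ≤ (p:ℝ) * (N:ℝ)^α / s := by
      have h1 : K = 1/δ := by
        rw [eq_div_iff hδ0.ne']
        exact hK
      rw [h1]
      rw [div_le_div_iff₀ hδ0 hs]
      have : s = t * (N:ℝ)^α := by rw [htdef]; field_simp
      calc 1 * s = t * (N:ℝ)^α := by rw [one_mul, this]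
      _ ≤ ((p:ℝ)*δ) * (N:ℝ)^α := by
          apply mul_le_mul_of_nonneg_right htδ.le hNα.le
      _ = (p:ℝ) * (N:ℝ)^α * δ := by ring
    have hK0 : 0 < K := by
      rw [hcardM]; positivity
    have hD0 : 0 ≤ C * (N:ℝ)^(-ε) := by positivity
    have term1 : K^2 * (C * (N:ℝ)^(-ε))^2 ≤ ((p:ℝ)*C/s)^2 * (N:ℝ)^(2*(α-ε)) := by
      have h2 : K * (C * (N:ℝ)^(-ε)) ≤ ((p:ℝ)*C/s) * (N:ℝ)^(α-ε) := by
        calc K * (C * (N:ℝ)^(-ε)) ≤ ((p:ℝ) * (N:ℝ)^α / s) * (C * (N:ℝ)^(-ε)) := by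
              apply mul_le_mul_of_nonneg_right hKle hD0
        _ = ((p:ℝ)*C/s) * ((N:ℝ)^α * (N:ℝ)^(-ε)) := by ring
        _ = ((p:ℝ)*C/s) * (N:ℝ)^(α-ε) := by
              rw [show α - ε = α + (-ε) by ring, Real.rpow_add hNr0]
      have h3 : 0 ≤ K * (C * (N:ℝ)^(-ε)) := by positivity
      calc K^2 * (C * (N:ℝ)^(-ε))^2 = (K * (C * (N:ℝ)^(-ε)))^2 := by ring
      _ ≤ (((p:ℝ)*C/s) * (N:ℝ)^(α-ε))^2 := pow_le_pow_left₀ h3 h2 2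
      _ = ((p:ℝ)*C/s)^2 * ((N:ℝ)^(α-ε))^2 := by ring
      _ = ((p:ℝ)*C/s)^2 * (N:ℝ)^(2*(α-ε)) := by
            rw [← Real.rpow_natCast ((N:ℝ)^(α-ε)) 2, ← Real.rpow_mul hNr0.le,
              show (α-ε)*((2:ℕ):ℝ) = 2*(α-ε) by push_cast; ring]
    have term2 : K / (N:ℝ) ≤ ((p:ℝ)/s) * (N:ℝ)^(α-1) := by
      calc K / (N:ℝ) ≤ ((p:ℝ) * (N:ℝ)^α / s) / (N:ℝ) := by gcongr
      _ = ((p:ℝ)/s) * ((N:ℝ)^α / (N:ℝ)) := by ring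
      _ = ((p:ℝ)/s) * (N:ℝ)^(α-1) := by
            rw [Real.rpow_sub hNr0, Real.rpow_one]
    linarith [term1, term2]
  -- conclude by squeezing
  rw [← tendsto_sub_nhds_zero_iff]
  apply squeeze_zero_norm' key
  have t1 : Tendsto (fun N : ℕ => ((p:ℝ)*C/s)^2 * (N:ℝ)^(2*(α-ε))) atTop (nhds 0) := by
    have h2 : Tendsto (fun N : ℕ => (N:ℝ)^(2*(α-ε))) atTop (nhds 0) := by
      have h3 : Tendsto (fun y : ℝ => y^(-(2*(ε-α)))) atTop (nhds 0) :=
        tendsto_rpow_neg_atTop (by linarith)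
      have h4 := h3.comp (tendsto_natCast_atTop_atTop (R := ℝ))
      have heq : (fun N : ℕ => (N:ℝ)^(2*(α-ε)))
          = (fun y : ℝ => y^(-(2*(ε-α)))) ∘ (fun N : ℕ => (N:ℝ)) := by
        funext N
        simp only [Function.comp]
        congr 1
        ring
      rw [heq]
      exact h4
    simpa using h2.const_mul (((p:ℝ)*C/s)^2)
  have t2 : Tendsto (fun N : ℕ => ((p:ℝ)/s) * (N:ℝ)^(α-1)) atTop (nhds 0) := by
    have h2 : Tendsto (fun N : ℕ => (N:ℝ)^(α-1)) atTop (nhds 0) := by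
      have h3 : Tendsto (fun y : ℝ => y^(-(1-α))) atTop (nhds 0) :=
        tendsto_rpow_neg_atTop (by linarith)
      have h4 := h3.comp (tendsto_natCast_atTop_atTop (R := ℝ))
      have heq : (fun N : ℕ => (N:ℝ)^(α-1))
          = (fun y : ℝ => y^(-(1-α))) ∘ (fun N : ℕ => (N:ℝ)) := by
        funext N
        simp only [Function.comp]
        congr 1
        ring
      rw [heq]
      exact h4
    simpa using h2.const_mul ((p:ℝ)/s)
  simpa using t1.add t2
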